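/- Let N ≥ 3 be odd and let (S,E) be the cycle of length N. Let Vbar = V/(F·e_S) and pi: V → Vbar the quotient map. Then pi restricts to a bijection from V_0 onto Vbar; in particular |V_0| = |V_1| = 2^{N−1}. -/

import Mathlib

set_option linter.unusedSectionVars false
set_option linter.unusedVariables false


/-- The induced subgraph of `adj` on `I` is a path (type `A_m`, `m ≥ 1`):
there is an injective enumeration `f : Fin (m+1) → S` of `I` such that two
elements of `I` are adjacent iff they are consecutive in the enumeration. -/
def IsPathOn {S : Type} [DecidableEq S] (adj : S → S → Prop) (I : Finset S) : Prop :=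
  ∃ (m : ℕ) (f : Fin (m + 1) → S), Function.Injective f ∧
    I = Finset.image f Finset.univ ∧
    ∀ i j : Fin (m + 1), adj (f i) (f j) ↔ ((i : ℕ) + 1 = (j : ℕ) ∨ (j : ℕ) + 1 = (i : ℕ))

/-- The induced subgraph of `adj` on `I` is connected. -/
def ConnOn {S : Type} (adj : S → S → Prop) (I : Finset S) : Prop :=
  ∀ s ∈ I, ∀ t ∈ I, Relation.ReflTransGen (fun a b => a ∈ I ∧ b ∈ I ∧ adj a b) s t

/-- `I ∈ Cal_I^1`: the induced subgraph on `I` is a path and `|I|` is odd. -/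
def CalI1 {S : Type} [DecidableEq S] (adj : S → S → Prop) (I : Finset S) : Prop :=
  IsPathOn adj I ∧ Odd I.card

/-- `I ≺ I'`. -/
def Prec {S : Type} [DecidableEq S] (adj : S → S → Prop) (I I' : Finset S) : Prop :=
  I ⊂ I' ∧ ¬ ConnOn adj (I' \ I)

/-- `I ♠ I'`. -/
def Spade {S : Type} [DecidableEq S] (adj : S → S → Prop) (I I' : Finset S) : Prop :=
  I ∩ I' = ∅ ∧ ¬ ConnOn adj (I ∪ I')

/-- `I^{ev}`: the set of `s ∈ I` such that `I ∖ {s}` is the disjoint union of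
`I', I'' ∈ Cal_I^1` with `I' ♠ I''`. -/
def Iev {S : Type} [DecidableEq S] (adj : S → S → Prop) (I : Finset S) : Set S :=
  {s | s ∈ I ∧ ∃ I' I'' : Finset S, CalI1 adj I' ∧ CalI1 adj I'' ∧
    Spade adj I' I'' ∧ I.erase s = I' ∪ I''}

/-- Property (P0). -/
def P0 {S : Type} [DecidableEq S] (adj : S → S → Prop) (B : Finset (Finset S)) : Prop :=
  ∀ I ∈ B, ∀ I' ∈ B, I = I' ∨ Spade adj I I' ∨ Prec adj I I' ∨ Prec adj I' I

/-- Property (P1). -/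
def P1 {S : Type} [DecidableEq S] (adj : S → S → Prop) (B : Finset (Finset S)) : Prop :=
  ∀ I ∈ B, ∃ (k : ℕ) (f : Fin k → Finset S),
    (∀ j, f j ∈ B ∧ Prec adj (f j) I) ∧
    (∀ j j', j ≠ j' → Disjoint (f j) (f j')) ∧
    Iev adj I ⊆ ⋃ j, ((f j : Finset S) : Set S)

/-- `phi`: finite sets `B` of elements of `Cal_I^1` satisfying (P0) and (P1). -/
def phiSet {S : Type} [DecidableEq S] (adj : S → S → Prop) : Set (Finset (Finset S)) :=
  {B | (∀ I ∈ B, CalI1 adj I) ∧ P0 adj B ∧ P1 adj B}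

/-- `supp(B)`. -/
def suppB {S : Type} [DecidableEq S] (B : Finset (Finset S)) : Finset S := B.biUnion id

/-- `g_s(B)`. -/
def gs {S : Type} [DecidableEq S] (B : Finset (Finset S)) (s : S) : ℕ :=
  (B.filter (fun I => s ∈ I)).card

/-- `e_I = ∑_{s ∈ I} e_s`. -/
def eSum {S : Type} {V : Type} [AddCommGroup V] [Module (ZMod 2) V]
    (e : S → V) (I : Finset S) : V := ∑ s ∈ I, e s

/-- `L_B`: the `F`-span of `{e_I : I ∈ B}`. -/
def LB {S : Type} {V : Type} [AddCommGroup V] [Module (ZMod 2) V]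
    (e : S → V) (B : Finset (Finset S)) : Submodule (ZMod 2) V :=
  Submodule.span (ZMod 2) ((fun I => eSum e I) '' (B : Set (Finset S)))

/-- `eps(B) = ∑_{s ∈ S} ((g_s(B)(g_s(B)+1)/2) mod 2) e_s`. -/
def epsB {S : Type} [DecidableEq S] [Fintype S] {V : Type} [AddCommGroup V]
    [Module (ZMod 2) V] (e : S → V) (B : Finset (Finset S)) : V :=
  ∑ s : S, ((gs B s * (gs B s + 1) / 2 : ℕ) : ZMod 2) • e s

/-- The triple `(V, <,>, e)` (with graph `adj`) is perfect. -/
def IsPerfect {S : Type} [DecidableEq S] [Fintype S] {V : Type} [AddCommGroup V]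
    [Module (ZMod 2) V] (adj : S → S → Prop) (e : S → V) : Prop :=
  (∀ B ∈ phiSet adj,
      (LinearIndependent (ZMod 2) (fun I : {I : Finset S // I ∈ B} => eSum e I.1)) ∧
      (∀ I : Finset S, CalI1 adj I → (eSum e I ∈ LB e B ↔ I ∈ B))) ∧
  (∀ B ∈ phiSet adj, epsB e B ∈ LB e B) ∧
  Set.BijOn (epsB e) (phiSet adj) (⋃ B ∈ phiSet adj, ((LB e B : Submodule (ZMod 2) V) : Set V)) ∧
  (∀ B ∈ phiSet adj, ∀ B' ∈ phiSet adj, epsB e B' ∈ LB e B → ∀ s : S, gs B' s ≤ gs B s)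
/-- Adjacency of the cycle of length `N` on `S = ZMod N`. -/
def cadj (N : ℕ) (i j : ZMod N) : Prop := j = i + 1 ∨ i = j + 1

/-- `V = F^S` for `S = ZMod N`. -/
abbrev Vc (N : ℕ) := ZMod N → ZMod 2

/-- The standard basis vector `e_s`. -/
def eVec (N : ℕ) (s : ZMod N) : Vc N := Pi.single s 1

/-- The line `F·e_S`, where `e_S = ∑_{s ∈ S} e_s`. -/
def radN (N : ℕ) [NeZero N] : Submodule (ZMod 2) (Vc N) :=
  Submodule.span (ZMod 2) {eSum (eVec N) Finset.univ}

/-- `Vbar = V / (F·e_S)`. -/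
abbrev VbarN (N : ℕ) [NeZero N] := Vc N ⧸ radN N

/-- The quotient map `pi : V → Vbar`. -/
def piQ (N : ℕ) [NeZero N] : Vc N →ₗ[ZMod 2] VbarN N := (radN N).mkQ

/-- `ebar_s = pi(e_s)`. -/
def ebar (N : ℕ) [NeZero N] (s : ZMod N) : VbarN N := piQ N (eVec N s)
open scoped Classical in
/-- The connected component of `s` in the induced subgraph of `adj` on `I`. -/
noncomputable def compOf {S : Type} [DecidableEq S] (adj : S → S → Prop)
    (I : Finset S) (s : S) : Finset S :=
  I.filter (fun t => Relation.ReflTransGen (fun a b => a ∈ I ∧ b ∈ I ∧ adj a b) s t)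

/-- `c(I)`: the set of vertex sets of connected components of the induced subgraph on `I`. -/
noncomputable def comps {S : Type} [DecidableEq S] (adj : S → S → Prop)
    (I : Finset S) : Finset (Finset S) :=
  I.image (compOf adj I)

/-- `|c^0(I)|`: the number of connected components of even cardinality. -/
noncomputable def c0card {S : Type} [DecidableEq S] (adj : S → S → Prop)
    (I : Finset S) : ℕ :=
  ((comps adj I).filter (fun C => Even C.card)).card

/-- `V_0 = {e_I : I ⊊ S with |c^0(I)| even}`. -/
def V0set (N : ℕ) [NeZero N] : Set (Vc N) :=
  {v | ∃ I : Finset (ZMod N), I ≠ Finset.univ ∧ Even (c0card (cadj N) I) ∧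
    v = eSum (eVec N) I}

/-- `V_1 = {e_S} ∪ {e_I : ∅ ≠ I ⊊ S with |c^0(I)| odd}`. -/
def V1set (N : ℕ) [NeZero N] : Set (Vc N) :=
  {v | v = eSum (eVec N) Finset.univ ∨ ∃ I : Finset (ZMod N), I ≠ ∅ ∧ I ≠ Finset.univ ∧
    Odd (c0card (cadj N) I) ∧ v = eSum (eVec N) I}
open scoped Classical in
/-- `I^{odd} = I ∖ I^{ev}` (as a `Finset`). -/
noncomputable def IoddF {S : Type} [DecidableEq S] (adj : S → S → Prop)
    (I : Finset S) : Finset S :=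
  I.filter (fun s => s ∉ Iev adj I)

/-- `n_B = |{I ∈ B : ee ⊆ I}|`. -/
def nB {S : Type} [DecidableEq S] (ee : Finset S) (B : Finset (Finset S)) : ℕ :=
  (B.filter (fun I => ee ⊆ I)).card

open scoped Classical in
/-- `B ↦ B^!`: remove the unique `I_B ∈ B` with `|I_B ∩ ee| = 1` when `n_B` is odd;
leave `B` unchanged when `n_B` is even. -/
noncomputable def bangF {S : Type} [DecidableEq S] (ee : Finset S)
    (B : Finset (Finset S)) : Finset (Finset S) :=
  if h : Odd (nB ee B) ∧ ∃ I ∈ B, (I ∩ ee).card = 1 then B.erase h.2.choose else B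

/-- `omega = {B^! : B ∈ phi}`. -/
def omegaSet {S : Type} [DecidableEq S] (adj : S → S → Prop) (ee : Finset S) :
    Set (Finset (Finset S)) :=
  (bangF ee) '' (phiSet adj)

open scoped Classical in
/-- `Btilde`: the unique element of `phi` with `Btilde^! = B`. -/
noncomputable def tildeF {S : Type} [DecidableEq S] (adj : S → S → Prop) (ee : Finset S)
    (C : Finset (Finset S)) : Finset (Finset S) :=
  if h : ∃ B ∈ phiSet adj, bangF ee B = C then h.choose else ∅

/-- `'eps(B) = eps(Btilde)`. -/
noncomputable def epsO {S : Type} [DecidableEq S] [Fintype S] {V : Type} [AddCommGroup V]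
    [Module (ZMod 2) V] (adj : S → S → Prop) (ee : Finset S) (e : S → V)
    (C : Finset (Finset S)) : V :=
  epsB e (tildeF adj ee C)

/-- `B' ⪯ B` on `omega`. -/
def preceqO {S : Type} [DecidableEq S] [Fintype S] {V : Type} [AddCommGroup V]
    [Module (ZMod 2) V] (adj : S → S → Prop) (ee : Finset S) (e : S → V)
    (B' B : Finset (Finset S)) : Prop :=
  ∃ (k : ℕ) (c : ℕ → Finset (Finset S)), c 0 = B' ∧ c k = B ∧
    (∀ i ≤ k, c i ∈ omegaSet adj ee) ∧
    (∀ i < k, epsO adj ee e (c i) ∈ LB e (c (i + 1)))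

/-- The linear form `v ↦ v t + v t'` on `V`. -/
def zeeV (N : ℕ) (t t' : ZMod N) : Vc N →ₗ[ZMod 2] ZMod 2 :=
  (LinearMap.proj t : Vc N →ₗ[ZMod 2] ZMod 2) + (LinearMap.proj t' : Vc N →ₗ[ZMod 2] ZMod 2)

/-- `z_ee : Vbar → F`, the linear map with `z_ee(ebar_s) = 1` iff `s ∈ ee = {t,t'}`. -/
noncomputable def zee (N : ℕ) [NeZero N] (t t' : ZMod N) : VbarN N →ₗ[ZMod 2] ZMod 2 :=
  Submodule.liftQ (radN N) (zeeV N t t') (by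
    rw [radN, Submodule.span_le, Set.singleton_subset_iff]
    have h1 : ∀ u : ZMod N, (eSum (eVec N) Finset.univ) u = 1 := by
      intro u
      simp [eSum, eVec, Finset.sum_apply, Finset.sum_pi_single]
    simp only [SetLike.mem_coe, LinearMap.mem_ker, zeeV, LinearMap.add_apply,
      LinearMap.proj_apply, h1]
    decide)
/-- The maximal elements of a finite family of finsets, under inclusion. -/
def maxElts {S : Type} [DecidableEq S] (C : Finset (Finset S)) : Finset (Finset S) :=
  C.filter (fun I => ∀ I' ∈ C, ¬ I ⊂ I')

/-- `restB B k = B ∖ (B_1 ∪ … ∪ B_k)`: what remains of `B` after removing the first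
`k` layers; the `k`-th layer (`k ≥ 1`) is `B_k = maxElts (restB B (k-1))`. -/
def restB {S : Type} [DecidableEq S] (B : Finset (Finset S)) : ℕ → Finset (Finset S)
  | 0 => B
  | k + 1 => restB B k \ maxElts (restB B k)

/-- The relation `B' ≤ B` on `phi(V)`. -/
def lePhi {S : Type} [DecidableEq S] [Fintype S] {V : Type} [AddCommGroup V]
    [Module (ZMod 2) V] (adj : S → S → Prop) (e : S → V)
    (B' B : Finset (Finset S)) : Prop :=
  ∃ (k : ℕ) (c : ℕ → Finset (Finset S)), c 0 = B' ∧ c k = B ∧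
    (∀ i ≤ k, c i ∈ phiSet adj) ∧
    (∀ i < k, epsB e (c i) ∈ LB e (c (i + 1)))


section Aux
variable {N : ℕ} [NeZero N]
open Finset

abbrev rIrel (N : ℕ) (I : Finset (ZMod N)) (a b : ZMod N) : Prop :=
  a ∈ I ∧ b ∈ I ∧ cadj N a b

lemma cadj_symm (N : ℕ) : Symmetric (cadj N) := fun _ _ h => h.symm

lemma rI_symm (I : Finset (ZMod N)) : Symmetric (rIrel N I) :=
  fun _ _ ⟨h1, h2, h3⟩ => ⟨h2, h1, h3.symm⟩

lemma chain_back {I : Finset (ZMod N)} {i t : ZMod N} (hi : i ∈ I) (hi1 : i + 1 ∉ I)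
    (h : Relation.ReflTransGen (rIrel N I) i t) :
    ∃ k : ℕ, t = i - (k : ZMod N) ∧ ∀ j ≤ k, i - (j : ZMod N) ∈ I := by
  induction h with
  | refl => exact ⟨0, by simp, fun j hj => by simp [Nat.le_zero.mp hj, hi]⟩
  | tail hab hr ih =>
    obtain ⟨k, rfl, hall⟩ := ih
    obtain ⟨ha, hb, hadj⟩ := hr
    rcases hadj with h1 | h1
    · rcases Nat.eq_zero_or_pos k with rfl | hk
      · exfalso; apply hi1
        rw [h1] at hb
        simpa using hb
      · refine ⟨k - 1, ?_, fun j hj => hall j (le_trans hj (Nat.sub_le _ _))⟩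
        rw [h1, Nat.cast_sub hk]; push_cast; ring
    · refine ⟨k + 1, ?_, fun j hj => ?_⟩
      · have h2 : _ = i - (k : ZMod N) - 1 := eq_sub_of_add_eq h1.symm
        rw [h2]; push_cast; ring
      · rcases eq_or_lt_of_le hj with rfl | hlt
        · have h2 : _ = i - (k : ZMod N) - 1 := eq_sub_of_add_eq h1.symm
          have h3 : i - ((k + 1 : ℕ) : ZMod N) = i - (k : ZMod N) - 1 := by push_cast; ring
          rw [h3, ← h2]; exact hb
        · exact hall j (Nat.lt_succ_iff.mp hlt)

lemma endpoint_unique {I : Finset (ZMod N)} {i j : ZMod N} (hi : i ∈ I) (hi1 : i + 1 ∉ I)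
    (hj1 : j + 1 ∉ I) (h : Relation.ReflTransGen (rIrel N I) i j) : i = j := by
  obtain ⟨k, rfl, hall⟩ := chain_back hi hi1 h
  rcases Nat.eq_zero_or_pos k with rfl | hk
  · simp
  · exfalso; apply hj1
    have h3 : i - (k : ZMod N) + 1 = i - ((k - 1 : ℕ) : ZMod N) := by
      rw [Nat.cast_sub hk]; push_cast; ring
    rw [h3]; exact hall _ (Nat.sub_le _ _)

lemma chain_fwd {I : Finset (ZMod N)} {t : ZMod N} (k : ℕ)
    (hall : ∀ j ≤ k, t + (j : ZMod N) ∈ I) :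
    Relation.ReflTransGen (rIrel N I) t (t + (k : ZMod N)) := by
  induction k with
  | zero => simpa using Relation.ReflTransGen.refl
  | succ k ih =>
    refine Relation.ReflTransGen.tail (ih (fun j hj => hall j (hj.trans (Nat.le_succ _)))) ?_
    refine ⟨hall k (Nat.le_succ _), hall (k + 1) le_rfl, Or.inl ?_⟩
    push_cast; ring

lemma endpoint_exists {I : Finset (ZMod N)} (hI : I ≠ Finset.univ) {t : ZMod N} (ht : t ∈ I) :
    ∃ i, Relation.ReflTransGen (rIrel N I) t i ∧ i ∈ I ∧ i + 1 ∉ I := by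
  obtain ⟨u, hu⟩ : ∃ u, u ∉ I := by
    by_contra h; push_neg at h; exact hI (Finset.eq_univ_iff_forall.mpr h)
  have hP : ∃ k : ℕ, t + ((k + 1 : ℕ) : ZMod N) ∉ I := by
    refine ⟨(u - t).val - 1, ?_⟩
    have hne : u ≠ t := fun h => hu (h ▸ ht)
    have hv : (u - t).val ≠ 0 := by
      simp only [ne_eq, ZMod.val_eq_zero, sub_eq_zero]; exact hne
    have h1 : ((u - t).val - 1 + 1 : ℕ) = (u - t).val := Nat.succ_pred_eq_of_pos (Nat.pos_of_ne_zero hv)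
    rw [h1, ZMod.natCast_val, ZMod.cast_id]
    simpa using hu
  classical
  set k0 := Nat.find hP with hk0def
  have hk0 : t + ((k0 + 1 : ℕ) : ZMod N) ∉ I := Nat.find_spec hP
  have hall : ∀ j ≤ k0, t + (j : ZMod N) ∈ I := by
    intro j hj
    rcases Nat.eq_zero_or_pos j with rfl | hjp
    · simpa using ht
    · have h2 := Nat.find_min hP (m := j - 1) (by omega)
      have h3 : t + ((j - 1 + 1 : ℕ) : ZMod N) ∈ I := not_not.mp h2
      rwa [show j - 1 + 1 = j by omega] at h3
  refine ⟨t + (k0 : ZMod N), chain_fwd k0 hall, hall k0 le_rfl, ?_⟩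
  have h4 : t + (k0 : ZMod N) + 1 = t + ((k0 + 1 : ℕ) : ZMod N) := by push_cast; ring
  rw [h4]; exact hk0

end Aux

section Comps
variable {S : Type} [DecidableEq S] {adj : S → S → Prop}
open Finset

lemma mem_compOf {I : Finset S} {s t : S} :
    t ∈ compOf adj I s ↔ t ∈ I ∧
      Relation.ReflTransGen (fun a b => a ∈ I ∧ b ∈ I ∧ adj a b) s t := by
  simp [compOf]

lemma self_mem_compOf {I : Finset S} {s : S} (hs : s ∈ I) : s ∈ compOf adj I s :=
  mem_compOf.mpr ⟨hs, Relation.ReflTransGen.refl⟩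

lemma compOf_eq (hs : Symmetric adj) {I : Finset S} {s t : S}
    (h : Relation.ReflTransGen (fun a b => a ∈ I ∧ b ∈ I ∧ adj a b) s t) :
    compOf adj I s = compOf adj I t := by
  have hsym : Symmetric (fun a b : S => a ∈ I ∧ b ∈ I ∧ adj a b) :=
    fun a b ⟨h1, h2, h3⟩ => ⟨h2, h1, hs h3⟩
  ext x
  rw [mem_compOf, mem_compOf]
  exact ⟨fun ⟨hx, hr⟩ => ⟨hx, (show Relation.ReflTransGen (fun a b => a ∈ I ∧ b ∈ I ∧ adj a b) t s by clear hr; induction h with | refl => exact Relation.ReflTransGen.refl | tail _ hbc ih => exact Relation.ReflTransGen.head (hsym hbc) ih).trans hr⟩,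
    fun ⟨hx, hr⟩ => ⟨hx, h.trans hr⟩⟩

lemma comps_biUnion (hs : Symmetric adj) (I : Finset S) :
    (comps adj I).biUnion id = I := by
  ext x
  simp only [Finset.mem_biUnion, comps, Finset.mem_image, id]
  constructor
  · rintro ⟨C, ⟨s, hs', rfl⟩, hx⟩
    exact (mem_compOf.mp hx).1
  · intro hx
    exact ⟨compOf adj I x, ⟨x, hx, rfl⟩, self_mem_compOf hx⟩

lemma comps_disj (hs : Symmetric adj) (I : Finset S) :
    ∀ C ∈ comps adj I, ∀ C' ∈ comps adj I, C ≠ C' → Disjoint C C' := by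
  intro C hC C' hC' hne
  simp only [comps, Finset.mem_image] at hC hC'
  obtain ⟨s, hsI, rfl⟩ := hC
  obtain ⟨t, htI, rfl⟩ := hC'
  rw [Finset.disjoint_left]
  intro x hx hx'
  exact hne ((compOf_eq hs (mem_compOf.mp hx).2).trans
    (compOf_eq hs (mem_compOf.mp hx').2).symm)

lemma card_eq_sum_comps (hs : Symmetric adj) (I : Finset S) :
    I.card = ∑ C ∈ comps adj I, C.card := by
  conv_lhs => rw [← comps_biUnion hs I]
  exact Finset.card_biUnion (comps_disj hs I)

lemma even_iff_cast {n : ℕ} : Even n ↔ (n : ZMod 2) = 0 := by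
  rw [Nat.even_iff, ← ZMod.natCast_mod n 2]
  rcases Nat.mod_two_eq_zero_or_one n with h | h <;> rw [h] <;> simp

lemma odd_iff_cast {n : ℕ} : Odd n ↔ (n : ZMod 2) = 1 := by
  rw [Nat.odd_iff, ← ZMod.natCast_mod n 2]
  rcases Nat.mod_two_eq_zero_or_one n with h | h <;> rw [h] <;> simp

lemma comps_parity (hs : Symmetric adj) (I : Finset S) :
    ((c0card adj I : ℕ) : ZMod 2) + ((comps adj I).card : ZMod 2) + (I.card : ZMod 2) = 0 := by
  classical
  have h1 : (I.card : ZMod 2)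
      = (((comps adj I).filter (fun C => ¬ Even C.card)).card : ZMod 2) := by
    rw [card_eq_sum_comps hs I, Nat.cast_sum]
    rw [← Finset.sum_filter_add_sum_filter_not (comps adj I) (fun C => Even C.card)]
    have he : ∑ C ∈ (comps adj I).filter (fun C => Even C.card), ((C.card : ℕ) : ZMod 2) = 0 := by
      apply Finset.sum_eq_zero
      intro C hC
      exact even_iff_cast.mp (Finset.mem_filter.mp hC).2
    have ho : ∑ C ∈ (comps adj I).filter (fun C => ¬ Even C.card), ((C.card : ℕ) : ZMod 2)
        = (((comps adj I).filter (fun C => ¬ Even C.card)).card : ZMod 2) := by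
      rw [Finset.sum_congr rfl (fun C hC =>
        odd_iff_cast.mp (Nat.not_even_iff_odd.mp (Finset.mem_filter.mp hC).2)),
        Finset.sum_const, nsmul_eq_mul, mul_one]
    rw [he, ho, zero_add]
  have h2 : (comps adj I).card = c0card adj I
      + ((comps adj I).filter (fun C => ¬ Even C.card)).card := by
    rw [c0card]
    exact (Finset.card_filter_add_card_filter_not _).symm
  have hz : ∀ a b : ZMod 2, a + (a + b) + b = 0 := by decide
  rw [h1, h2]
  push_cast
  exact hz _ _

end Comps

section Cycle
variable {N : ℕ} [NeZero N]
open Finset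

lemma comps_card_eq {I : Finset (ZMod N)} (hI : I ≠ Finset.univ) :
    (comps (cadj N) I).card = (I.filter (fun i => i + 1 ∉ I)).card := by
  classical
  symm
  refine Finset.card_bij (fun i _ => compOf (cadj N) I i) ?_ ?_ ?_
  · intro i hi
    rw [Finset.mem_filter] at hi
    exact Finset.mem_image.mpr ⟨i, hi.1, rfl⟩
  · intro a ha b hb hab
    rw [Finset.mem_filter] at ha hb
    have hab' : compOf (cadj N) I a = compOf (cadj N) I b := hab
    have hb' : b ∈ compOf (cadj N) I a := by rw [hab']; exact self_mem_compOf hb.1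
    exact endpoint_unique ha.1 ha.2 hb.2 (mem_compOf.mp hb').2
  · intro C hC
    obtain ⟨t, ht, rfl⟩ := Finset.mem_image.mp hC
    obtain ⟨i, hti, hiI, hi1⟩ := endpoint_exists hI ht
    exact ⟨i, Finset.mem_filter.mpr ⟨hiI, hi1⟩, (compOf_eq (cadj_symm N) hti).symm⟩

lemma shift_card (I : Finset (ZMod N)) :
    (Finset.univ.filter (fun i : ZMod N => i + 1 ∈ I)).card = I.card := by
  refine Finset.card_bij (fun i _ => i + 1) ?_ ?_ ?_
  · intro a ha; exact (Finset.mem_filter.mp ha).2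
  · intro a _ b _ h; exact add_right_cancel h
  · intro b hb; exact ⟨b - 1, Finset.mem_filter.mpr ⟨Finset.mem_univ _, by simpa using hb⟩, by ring⟩

lemma boundary_card (I : Finset (ZMod N)) :
    (I.filter (fun i => i + 1 ∉ I)).card = (Iᶜ.filter (fun i => i + 1 ∉ Iᶜ)).card := by
  classical
  have e1 : (Finset.univ.filter (fun i : ZMod N => i + 1 ∈ I)).filter (· ∈ I)
      = I.filter (fun i => i + 1 ∈ I) := by
    ext x; simp [and_comm]
  have e2 : (Finset.univ.filter (fun i : ZMod N => i + 1 ∈ I)).filter (fun i => ¬ i ∈ I)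
      = Iᶜ.filter (fun i => i + 1 ∉ Iᶜ) := by
    ext x; simp [and_comm]
  have h1 := Finset.card_filter_add_card_filter_not
    (s := Finset.univ.filter (fun i : ZMod N => i + 1 ∈ I)) (p := (· ∈ I))
  rw [e1, e2, shift_card] at h1
  have h2 := Finset.card_filter_add_card_filter_not (s := I) (p := fun i => i + 1 ∈ I)
  have e3 : I.filter (fun i => ¬ i + 1 ∈ I) = I.filter (fun i => i + 1 ∉ I) := rfl
  rw [e3] at h2
  omega

lemma parity_main (hodd : Odd N) {I : Finset (ZMod N)} (hne : I ≠ ∅) (hI : I ≠ Finset.univ) :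
    ((c0card (cadj N) I : ℕ) : ZMod 2) + ((c0card (cadj N) Iᶜ : ℕ) : ZMod 2) = 1 := by
  classical
  have hIc_ne : Iᶜ ≠ Finset.univ := by
    intro h
    apply hne
    have := congrArg (·ᶜ) h
    simpa using this
  have p1 := comps_parity (cadj_symm N) I
  have p2 := comps_parity (cadj_symm N) Iᶜ
  rw [comps_card_eq hI, boundary_card I] at p1
  rw [comps_card_eq hIc_ne] at p2
  have hcard : I.card + Iᶜ.card = N := by
    rw [Finset.card_add_card_compl, ZMod.card]
  have hN1 : ((N : ℕ) : ZMod 2) = 1 := odd_iff_cast.mp hodd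
  have := congrArg (fun n : ℕ => ((n : ZMod 2))) hcard
  push_cast at this
  rw [hN1] at this
  have hz : ∀ a b c d e : ZMod 2, a + b + c = 0 → d + b + e = 0 → c + e = 1 → a + d = 1 := by decide
  exact hz _ _ _ _ _ p1 p2 this

lemma c0card_empty : c0card (cadj N) (∅ : Finset (ZMod N)) = 0 := by
  simp [c0card, comps]

end Cycle

section LinPart
variable {N : ℕ} [NeZero N]
open Finset

lemma eSum_apply (I : Finset (ZMod N)) (u : ZMod N) :
    eSum (eVec N) I u = if u ∈ I then 1 else 0 := by
  simp [eSum, eVec, Finset.sum_apply, Finset.sum_pi_single]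

lemma eSum_inj : Function.Injective (fun I : Finset (ZMod N) => eSum (eVec N) I) := by
  intro I J h
  ext u
  have h2 : eSum (eVec N) I u = eSum (eVec N) J u := congrFun h u
  rw [eSum_apply, eSum_apply] at h2
  constructor <;> intro hu
  · by_contra hj; rw [if_pos hu, if_neg hj] at h2; exact one_ne_zero h2
  · by_contra hj; rw [if_neg hj, if_pos hu] at h2; exact one_ne_zero h2.symm

lemma eSum_surj (v : Vc N) : ∃ I : Finset (ZMod N), v = eSum (eVec N) I := by
  classical
  refine ⟨Finset.univ.filter (fun u => v u = 1), ?_⟩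
  funext u
  rw [eSum_apply]
  simp only [Finset.mem_filter, Finset.mem_univ, true_and]
  have h2 : v u = 0 ∨ v u = 1 := by
    have h3 : ∀ x : ZMod 2, x = 0 ∨ x = 1 := by decide
    exact h3 _
  rcases h2 with h | h <;> simp [h]

lemma eSum_sub_compl (I : Finset (ZMod N)) :
    eSum (eVec N) I - eSum (eVec N) Iᶜ = eSum (eVec N) Finset.univ := by
  funext u
  simp only [Pi.sub_apply, eSum_apply, Finset.mem_compl, Finset.mem_univ, if_true]
  by_cases hu : u ∈ I <;> simp [hu] <;> decide

lemma pi_eq_iff (I J : Finset (ZMod N)) :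
    piQ N (eSum (eVec N) I) = piQ N (eSum (eVec N) J) ↔ J = I ∨ J = Iᶜ := by
  have hmk : ∀ v : Vc N, piQ N v = Submodule.Quotient.mk v := fun v => rfl
  rw [hmk, hmk, Submodule.Quotient.eq, radN, Submodule.mem_span_singleton]
  constructor
  · rintro ⟨a, ha⟩
    have h2 : a = 0 ∨ a = 1 := by
      have h3 : ∀ x : ZMod 2, x = 0 ∨ x = 1 := by decide
      exact h3 _
    rcases h2 with rfl | rfl
    · left
      apply eSum_inj
      show eSum (eVec N) J = eSum (eVec N) I
      rw [zero_smul] at ha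
      exact (sub_eq_zero.mp ha.symm).symm
    · right
      apply eSum_inj
      show eSum (eVec N) J = eSum (eVec N) Iᶜ
      rw [one_smul] at ha
      have h4 : eSum (eVec N) J = eSum (eVec N) I - eSum (eVec N) Finset.univ := by
        rw [ha]; ring
      rw [h4, ← eSum_sub_compl I]
      ring
  · rintro (rfl | rfl)
    · exact ⟨0, by rw [zero_smul, sub_self]⟩
    · exact ⟨1, by rw [one_smul, eSum_sub_compl]⟩

end LinPart

open scoped Classical in
noncomputable def goodF (N : ℕ) [NeZero N] : Finset (Finset (ZMod N)) :=
  Finset.univ.filter (fun I => I ≠ Finset.univ ∧ Even (c0card (cadj N) I))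

open scoped Classical in
noncomputable def badF (N : ℕ) [NeZero N] : Finset (Finset (ZMod N)) :=
  Finset.univ.filter
    (fun I => I = Finset.univ ∨ (I ≠ ∅ ∧ I ≠ Finset.univ ∧ Odd (c0card (cadj N) I)))

section Cards
variable {N : ℕ} [NeZero N]
open Finset

lemma mem_goodF {I : Finset (ZMod N)} :
    I ∈ goodF N ↔ I ≠ Finset.univ ∧ Even (c0card (cadj N) I) := by
  simp [goodF]

lemma mem_badF {I : Finset (ZMod N)} :
    I ∈ badF N ↔ I = Finset.univ ∨
      (I ≠ ∅ ∧ I ≠ Finset.univ ∧ Odd (c0card (cadj N) I)) := by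
  simp [badF]

lemma compl_ne_univ {I : Finset (ZMod N)} (h : I ≠ ∅) : Iᶜ ≠ Finset.univ := by
  intro hc
  apply h
  have h2 := congrArg (·ᶜ) hc
  simpa using h2

lemma empty_ne_univ : (∅ : Finset (ZMod N)) ≠ Finset.univ :=
  fun h => Finset.univ_nonempty.ne_empty h.symm

lemma good_compl (hodd : Odd N) {I : Finset (ZMod N)} (h : I ∈ goodF N) : Iᶜ ∈ badF N := by
  rw [mem_goodF] at h
  rw [mem_badF]
  by_cases hne : I = ∅
  · left; rw [hne, Finset.compl_empty]
  · right
    have hp := parity_main hodd hne h.1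
    refine ⟨by simpa using h.1, compl_ne_univ hne, ?_⟩
    rw [odd_iff_cast]
    have he := even_iff_cast.mp h.2
    have hz : ∀ a b : ZMod 2, a + b = 1 → a = 0 → b = 1 := by decide
    exact hz _ _ hp he

lemma bad_compl (hodd : Odd N) {I : Finset (ZMod N)} (h : I ∈ badF N) : Iᶜ ∈ goodF N := by
  rw [mem_badF] at h
  rw [mem_goodF]
  rcases h with rfl | ⟨hne, hnu, ho⟩
  · rw [Finset.compl_univ]
    exact ⟨empty_ne_univ, by rw [c0card_empty]; exact Even.zero⟩
  · have hp := parity_main hodd hne hnu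
    refine ⟨compl_ne_univ hne, ?_⟩
    rw [even_iff_cast]
    have he := odd_iff_cast.mp ho
    have hz : ∀ a b : ZMod 2, a + b = 1 → a = 1 → b = 0 := by decide
    exact hz _ _ hp he

lemma badF_eq_compl : badF N = (goodF N)ᶜ := by
  ext I
  rw [Finset.mem_compl, mem_badF, mem_goodF]
  constructor
  · rintro (rfl | ⟨hne, hnu, ho⟩)
    · intro h; exact h.1 rfl
    · intro h; exact (Nat.not_even_iff_odd.mpr ho) h.2
  · intro h
    by_cases hI : I = Finset.univ
    · exact Or.inl hI
    · push_neg at h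
      have ho := Nat.not_even_iff_odd.mp (h hI)
      have hne : I ≠ ∅ := by
        intro he
        rw [he, c0card_empty] at ho
        exact (Nat.not_even_iff_odd.mpr ho) Even.zero
      exact Or.inr ⟨hne, hI, ho⟩

lemma card_good_eq_bad (hodd : Odd N) : (goodF N).card = (badF N).card := by
  refine Finset.card_bij (fun I _ => Iᶜ) (fun I hI => good_compl hodd hI) ?_ ?_
  · intro a _ b _ h
    have h2 : aᶜ = bᶜ := h
    simpa using congrArg (·ᶜ) h2
  · intro b hb
    exact ⟨bᶜ, bad_compl hodd hb, by simp⟩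

lemma card_goodF (hN : 3 ≤ N) (hodd : Odd N) : (goodF N).card = 2 ^ (N - 1) := by
  have h1 : (goodF N).card + ((goodF N)ᶜ).card = Fintype.card (Finset (ZMod N)) :=
    Finset.card_add_card_compl _
  rw [← badF_eq_compl, ← card_good_eq_bad hodd, Fintype.card_finset, ZMod.card] at h1
  have h2 : 2 ^ N = 2 * 2 ^ (N - 1) := by
    rw [← pow_succ']
    congr 1
    omega
  omega

lemma card_badF (hN : 3 ≤ N) (hodd : Odd N) : (badF N).card = 2 ^ (N - 1) := by
  rw [← card_good_eq_bad hodd, card_goodF hN hodd]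

lemma V0_eq : V0set N = (fun I : Finset (ZMod N) => eSum (eVec N) I) '' ↑(goodF N) := by
  ext v
  constructor
  · rintro ⟨I, h1, h2, rfl⟩
    exact ⟨I, Finset.mem_coe.mpr (mem_goodF.mpr ⟨h1, h2⟩), rfl⟩
  · rintro ⟨I, hI, rfl⟩
    have h := mem_goodF.mp (Finset.mem_coe.mp hI)
    exact ⟨I, h.1, h.2, rfl⟩

lemma V1_eq : V1set N = (fun I : Finset (ZMod N) => eSum (eVec N) I) '' ↑(badF N) := by
  ext v
  constructor
  · rintro (rfl | ⟨I, h1, h2, h3, rfl⟩)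
    · exact ⟨Finset.univ, Finset.mem_coe.mpr (mem_badF.mpr (Or.inl rfl)), rfl⟩
    · exact ⟨I, Finset.mem_coe.mpr (mem_badF.mpr (Or.inr ⟨h1, h2, h3⟩)), rfl⟩
  · rintro ⟨I, hI, rfl⟩
    rcases mem_badF.mp (Finset.mem_coe.mp hI) with rfl | ⟨h1, h2, h3⟩
    · exact Or.inl rfl
    · exact Or.inr ⟨I, h1, h2, h3, rfl⟩

end Cards

/-- `pi` restricts to a bijection from `V_0` onto `Vbar`; in particular
`|V_0| = |V_1| = 2^{N-1}`. -/
theorem statement6 (N : ℕ) [NeZero N] (hN : 3 ≤ N) (hodd : Odd N) :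
    Set.BijOn (piQ N) (V0set N) (Set.univ : Set (VbarN N)) ∧
    (V0set N).ncard = 2 ^ (N - 1) ∧ (V1set N).ncard = 2 ^ (N - 1) := by
  constructor
  · refine ⟨fun v _ => trivial, ?_, ?_⟩
    · rintro v ⟨I, hIu, hIe, rfl⟩ w ⟨J, hJu, hJe, rfl⟩ h
      rcases (pi_eq_iff I J).mp h with rfl | rfl
      · rfl
      · exfalso
        by_cases hne : I = ∅
        · rw [hne, Finset.compl_empty] at hJu
          exact hJu rfl
        · have hp := parity_main hodd hne hIu
          have hz : ∀ a b : ZMod 2, a = 0 → b = 0 → a + b = 1 → False := by decide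
          exact hz _ _ (even_iff_cast.mp hIe) (even_iff_cast.mp hJe) hp
    · intro x _
      obtain ⟨v, hv⟩ := Submodule.mkQ_surjective (radN N) x
      obtain ⟨I, rfl⟩ := eSum_surj v
      have hpiq : piQ N (eSum (eVec N) I) = x := hv
      by_cases hI : I ≠ Finset.univ ∧ Even (c0card (cadj N) I)
      · exact ⟨eSum (eVec N) I, ⟨I, hI.1, hI.2, rfl⟩, hpiq⟩
      · refine ⟨eSum (eVec N) Iᶜ, ?_, ?_⟩
        · by_cases hIu : I = Finset.univ
          · subst hIu
            rw [Finset.compl_univ]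
            exact ⟨∅, empty_ne_univ, by rw [c0card_empty]; exact Even.zero, rfl⟩
          · push_neg at hI
            have ho := Nat.not_even_iff_odd.mp (hI hIu)
            have hne : I ≠ ∅ := by
              intro he
              rw [he, c0card_empty] at ho
              exact (Nat.not_even_iff_odd.mpr ho) Even.zero
            have hp := parity_main hodd hne hIu
            refine ⟨Iᶜ, compl_ne_univ hne, ?_, rfl⟩
            rw [even_iff_cast]
            have hz : ∀ a b : ZMod 2, a + b = 1 → a = 1 → b = 0 := by decide
            exact hz _ _ hp (odd_iff_cast.mp ho)
        · rw [← hpiq]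
          exact ((pi_eq_iff I Iᶜ).mpr (Or.inr rfl)).symm
  constructor
  · rw [V0_eq, Set.ncard_image_of_injective _ eSum_inj, Set.ncard_coe_finset,
      card_goodF hN hodd]
  · rw [V1_eq, Set.ncard_image_of_injective _ eSum_inj, Set.ncard_coe_finset,
      card_badF hN hodd]
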